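/- arXiv:2002.04710 — 3 statements merged into one kernel-verified Lean document; each statement's English description precedes it below -/
import Mathlib

section
/- The minimal value over all w ∈ ℝ^m with ∏_{j=1}^m w_j = τ (τ ≠ 0) of 2σ̂_x²τ² ∑_{j=1}^m 1/w_j² equals 2 m σ̂_x² |τ|^{2(1−1/m)}. -/
/-- Minimal sharpness over global minima of a scalar `m`-layer linear network:
the least value of `2σ̂²τ² ∑ 1/wⱼ²` over all `w` with `∏ wⱼ = τ` is
`2 m σ̂² |τ|^(2(1-1/m))`. -/
theorem stmt4 (m : ℕ) (hm : 0 < m) (σ2 τ : ℝ) (hσ : 0 < σ2) (hτ : τ ≠ 0) :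
    IsLeast {r : ℝ | ∃ w : Fin m → ℝ, (∏ j, w j) = τ ∧
        r = 2 * σ2 * τ ^ 2 * ∑ j, 1 / (w j) ^ 2}
      (2 * m * σ2 * |τ| ^ (2 * (1 - 1 / (m : ℝ)))) := by
  have hm' : (m : ℝ) ≠ 0 := Nat.cast_ne_zero.mpr hm.ne'
  have ha : (0:ℝ) < |τ| := abs_pos.mpr hτ
  have hτ2 : (0:ℝ) < τ ^ 2 := by positivity
  have hkey : |τ| ^ (2 * (1 - 1 / (m : ℝ))) = τ ^ 2 * |τ| ^ (-(2 / (m:ℝ))) := by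
    have h1 : 2 * (1 - 1 / (m : ℝ)) = 2 + (-(2 / (m:ℝ))) := by ring
    rw [h1, Real.rpow_add ha, show ((2:ℝ)) = ((2:ℕ):ℝ) by norm_num,
      Real.rpow_natCast, sq_abs]
  constructor
  · -- membership
    obtain ⟨c, hc_def⟩ : ∃ c : ℝ, c = |τ| ^ ((m:ℝ)⁻¹) := ⟨_, rfl⟩
    have hc : 0 < c := by rw [hc_def]; exact Real.rpow_pos_of_pos ha _
    have hcm : c ^ m = |τ| := by
      rw [hc_def, ← Real.rpow_natCast (|τ| ^ ((m:ℝ)⁻¹)) m,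
        ← Real.rpow_mul (abs_nonneg τ), inv_mul_cancel₀ hm', Real.rpow_one]
    have i0 : Fin m := ⟨0, hm⟩
    refine ⟨Function.update (fun _ => c) i0 (τ / c ^ (m - 1)), ?_, ?_⟩
    · rw [Finset.prod_update_of_mem (Finset.mem_univ i0), Finset.prod_const]
      have hcard : (Finset.univ \ {i0}).card = m - 1 := by
        rw [Finset.card_sdiff_of_subset (Finset.subset_univ _), Finset.card_univ,
          Finset.card_singleton, Fintype.card_fin]
      rw [hcard, div_mul_cancel₀ _ (pow_ne_zero _ hc.ne')]
    · have hwsq : (τ / c ^ (m - 1)) ^ 2 = c ^ 2 := by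
        have hτc : τ ^ 2 = c ^ (2 * m) := by
          rw [mul_comm, pow_mul, hcm, sq_abs]
        rw [div_pow, hτc, ← pow_mul, div_eq_iff (pow_ne_zero _ hc.ne'), ← pow_add]
        congr 1
        omega
      have hsum : ∑ j, 1 / (Function.update (fun _ => c) i0 (τ / c ^ (m - 1)) j) ^ 2
          = (m : ℝ) * (1 / c ^ 2) := by
        rw [show (fun j => 1 / (Function.update (fun _ => c) i0 (τ / c ^ (m - 1)) j) ^ 2)
            = fun j => (1 / c ^ 2 : ℝ) from ?_]
        · rw [Finset.sum_const, Finset.card_univ, Fintype.card_fin, nsmul_eq_mul]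
        · funext j
          by_cases hj : j = i0
          · subst hj; rw [Function.update_self, hwsq]
          · rw [Function.update_of_ne hj]
      rw [hsum, hkey]
      have hc2' : c ^ 2 = |τ| ^ (2 / (m:ℝ)) := by
        rw [hc_def, ← Real.rpow_natCast (|τ| ^ ((m:ℝ)⁻¹)) 2,
          ← Real.rpow_mul (abs_nonneg τ)]
        congr 1
        push_cast
        ring
      have hc2 : (1 : ℝ) / c ^ 2 = |τ| ^ (-(2 / (m:ℝ))) := by
        rw [Real.rpow_neg (abs_nonneg τ), ← hc2', one_div]
      rw [hc2]; ring
  · rintro r ⟨w, hw, rfl⟩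
    have hwj : ∀ j, w j ≠ 0 := by
      intro j h
      apply hτ
      rw [← hw]
      exact Finset.prod_eq_zero (Finset.mem_univ j) h
    have hAM := Real.geom_mean_le_arith_mean_weighted Finset.univ
      (fun _ => (m:ℝ)⁻¹) (fun j => 1 / (w j) ^ 2)
      (fun i _ => by positivity) (by
        simp [Finset.sum_const, Finset.card_univ, mul_inv_cancel₀ hm'])
      (fun i _ => by positivity)
    have hprod : ∏ j, ((1 / (w j) ^ 2 : ℝ)) ^ ((m:ℝ)⁻¹)
        = |τ| ^ (-(2 / (m:ℝ))) := by
      rw [Real.finset_prod_rpow _ _ (fun i _ => by positivity) _]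
      have : ∏ j, (1 / (w j) ^ 2 : ℝ) = 1 / τ ^ 2 := by
        rw [← hw, ← Finset.prod_pow]
        rw [Finset.prod_div_distrib, Finset.prod_const_one]
      rw [this, ← sq_abs, one_div, ← Real.rpow_natCast |τ| 2,
        ← Real.rpow_neg (abs_nonneg τ), ← Real.rpow_mul (abs_nonneg τ)]
      norm_num
      ring_nf
    rw [hprod] at hAM
    have hsum : ∑ i, ((m:ℝ)⁻¹ * (1 / (w i) ^ 2)) = (m:ℝ)⁻¹ * ∑ i, 1 / (w i) ^ 2 := by
      rw [Finset.mul_sum]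
    rw [hsum] at hAM
    have hmpos : (0:ℝ) < m := Nat.cast_pos.mpr hm
    have h2 : (m:ℝ) * |τ| ^ (-(2 / (m:ℝ))) ≤ ∑ i, 1 / (w i) ^ 2 := by
      rw [mul_comm, ← le_div_iff₀ hmpos, div_eq_inv_mul] at *
      exact hAM
    rw [hkey]
    nlinarith [mul_le_mul_of_nonneg_left h2 (le_of_lt (by positivity : (0:ℝ) < 2 * σ2 * τ ^ 2))]
end

section
/- Let T ∈ ℝ^{d×d} with singular values σ_1 ≥ ⋯ ≥ σ_d > 0, and let S^α denote the diagonal matrix diag(σ_1^α, …, σ_d^α). Then max over B̃ ∈ ℝ^{d×d} with ‖B̃‖_F = 1 of ∑_{k=1}^m ‖S^{(m−k)/m} B̃ S^{(k−1)/m}‖_F² equals m · σ_1^{2(1−1/m)}. -/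
/-- The Frobenius norm of a real matrix. -/
noncomputable def frobNorm {m n : Type*} [Fintype m] [Fintype n]
    (A : Matrix m n ℝ) : ℝ :=
  Real.sqrt (∑ i, ∑ j, (A i j) ^ 2)

lemma frob_sq {d : ℕ} (f g : Fin d → ℝ) (B : Matrix (Fin d) (Fin d) ℝ) :
    frobNorm (Matrix.diagonal f * B * Matrix.diagonal g) ^ 2
      = ∑ i, ∑ j, (f i) ^ 2 * (g j) ^ 2 * (B i j) ^ 2 := by
  unfold frobNorm
  rw [Real.sq_sqrt (by positivity)]
  congr 1; ext i; congr 1; ext j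
  simp [Matrix.mul_apply, Matrix.diagonal, Finset.sum_ite_eq, Finset.sum_ite_eq']
  ring

lemma rpow_sq (x a : ℝ) (hx : 0 < x) : (x ^ a) ^ 2 = x ^ (2 * a) := by
  rw [sq, ← Real.rpow_add hx]; ring_nf

/-- At the canonical balanced solution: the maximum over Frobenius-unit-norm `B̃`
of `∑_{k=1}^m ‖S^((m-k)/m) B̃ S^((k-1)/m)‖_F²` equals `m · σ₁^(2(1-1/m))`. -/
theorem stmt9 (d m : ℕ) (hd : 0 < d) (hm : 1 ≤ m) (σ : Fin d → ℝ)
    (hpos : ∀ i, 0 < σ i) (hmono : ∀ i j : Fin d, i ≤ j → σ j ≤ σ i) :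
    IsGreatest {r : ℝ | ∃ B : Matrix (Fin d) (Fin d) ℝ, frobNorm B = 1 ∧
        r = ∑ k ∈ Finset.range m,
          frobNorm (Matrix.diagonal (fun i => σ i ^ (((m : ℝ) - (k + 1)) / m)) * B *
            Matrix.diagonal (fun i => σ i ^ ((k : ℝ) / m))) ^ 2}
      ((m : ℝ) * σ ⟨0, hd⟩ ^ (2 * (1 - 1 / (m : ℝ)))) := by
  have hm0 : (m : ℝ) ≠ 0 := by
    exact_mod_cast Nat.one_le_iff_ne_zero.mp hm
  set z : Fin d := ⟨0, hd⟩ with hz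
  have hσ1 : 0 < σ z := hpos z
  have hle : ∀ i, σ i ≤ σ z := fun i => hmono z i (Fin.mk_le_mk.mpr (Nat.zero_le _))
  -- exponent arithmetic
  have hexp : ∀ k ∈ Finset.range m,
      2 * (((m : ℝ) - (k + 1)) / m) + 2 * ((k : ℝ) / m) = 2 * (1 - 1 / (m : ℝ)) := by
    intro k _
    field_simp
    ring
  constructor
  · -- membership: B = stdBasisMatrix z z 1
    refine ⟨fun i j => if i = z ∧ j = z then 1 else 0, ?_, ?_⟩
    · unfold frobNorm
      rw [show (∑ i, ∑ j, ((fun i j => if i = z ∧ j = z then (1:ℝ) else 0) i j) ^ 2) = 1 by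
        rw [Finset.sum_eq_single z, Finset.sum_eq_single z] <;> simp +contextual]
      exact Real.sqrt_one
    · erw [Finset.sum_congr rfl (fun k hk => frob_sq _ _ _)]
      have : ∀ k ∈ Finset.range m,
          (∑ i, ∑ j, (σ i ^ (((m : ℝ) - (k + 1)) / m)) ^ 2 * (σ j ^ ((k : ℝ) / m)) ^ 2 *
            ((if i = z ∧ j = z then (1:ℝ) else 0)) ^ 2)
          = σ z ^ (2 * (1 - 1 / (m : ℝ))) := by
        intro k hk
        rw [Finset.sum_eq_single z, Finset.sum_eq_single z]
        · have hif : (if z = z ∧ z = z then (1:ℝ) else 0) = 1 := if_pos ⟨rfl, rfl⟩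
          rw [hif, one_pow, mul_one, rpow_sq _ _ hσ1, rpow_sq _ _ hσ1,
            ← Real.rpow_add hσ1, hexp k hk]
        all_goals simp +contextual
      rw [Finset.sum_congr rfl this, Finset.sum_const, Finset.card_range, nsmul_eq_mul]
  · -- upper bound
    rintro r ⟨B, hB, rfl⟩
    have hBsum : (∑ i, ∑ j, (B i j) ^ 2) = 1 := by
      have := congrArg (· ^ 2) hB
      simpa [frobNorm, Real.sq_sqrt (show (0:ℝ) ≤ ∑ i, ∑ j, (B i j)^2 by positivity)] using this
    rw [Finset.sum_congr rfl (fun k hk => frob_sq _ _ _)]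
    calc ∑ k ∈ Finset.range m, ∑ i, ∑ j,
          (σ i ^ (((m : ℝ) - (k + 1)) / m)) ^ 2 * (σ j ^ ((k : ℝ) / m)) ^ 2 * (B i j) ^ 2
        ≤ ∑ k ∈ Finset.range m, ∑ i, ∑ j,
          σ z ^ (2 * (1 - 1 / (m : ℝ))) * (B i j) ^ 2 := by
          refine Finset.sum_le_sum fun k hk => Finset.sum_le_sum fun i _ =>
            Finset.sum_le_sum fun j _ => ?_
          have hk' : (k : ℝ) + 1 ≤ m := by
            exact_mod_cast Nat.succ_le_of_lt (Finset.mem_range.mp hk)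
          have he1 : (0:ℝ) ≤ ((m : ℝ) - (k + 1)) / m := by
            apply div_nonneg (by linarith) (by positivity)
          have he2 : (0:ℝ) ≤ (k : ℝ) / m := by positivity
          have h1 : (σ i ^ (((m : ℝ) - (k + 1)) / m)) ^ 2
              ≤ σ z ^ (2 * (((m : ℝ) - (k + 1)) / m)) := by
            rw [rpow_sq _ _ (hpos i)]
            exact Real.rpow_le_rpow (hpos i).le (hle i) (by linarith)
          have h2 : (σ j ^ ((k : ℝ) / m)) ^ 2 ≤ σ z ^ (2 * ((k : ℝ) / m)) := by
            rw [rpow_sq _ _ (hpos j)]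
            exact Real.rpow_le_rpow (hpos j).le (hle j) (by linarith)
          have := mul_le_mul h1 h2 (by positivity) (by positivity)
          rw [← Real.rpow_add hσ1, hexp k hk] at this
          exact mul_le_mul_of_nonneg_right this (by positivity)
      _ = (m : ℝ) * σ z ^ (2 * (1 - 1 / (m : ℝ))) := by
          have : ∀ k ∈ Finset.range m, (∑ i, ∑ j, σ z ^ (2 * (1 - 1 / (m : ℝ))) * (B i j) ^ 2)
              = σ z ^ (2 * (1 - 1 / (m : ℝ))) := by
            intro k _
            simp only [← Finset.mul_sum, hBsum, mul_one]
          rw [Finset.sum_congr rfl this, Finset.sum_const, Finset.card_range, nsmul_eq_mul]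
end

section
/- Let T ∈ ℝ^{d×d} be a matrix and suppose square matrices W_1, …, W_m satisfy W_m⋯W_1 = T and W_i W_iᵀ = W_{i+1}ᵀ W_{i+1} for all i = 1,…,m−1. Then all W_i have the same singular values, and these are the m-th roots of the singular values of T. -/
open Matrix Polynomial

/-- Characteristic polynomials of `A * B` and `B * A` agree (over `ℝ`). -/
lemma charpoly_mul_comm' {n : ℕ} (A B : Matrix (Fin n) (Fin n) ℝ) :
    (A * B).charpoly = (B * A).charpoly := by
  classical
  set K := FractionRing (Polynomial ℝ)
  let φ : Polynomial ℝ →+* K := algebraMap _ _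
  have hφ : Function.Injective φ := IsFractionRing.injective _ _
  apply hφ
  have hdet : ∀ M : Matrix (Fin n) (Fin n) ℝ, φ M.charpoly
      = ((charmatrix M).map φ).det := fun M => RingHom.map_det φ _
  have hx : (φ X) ≠ 0 := by
    simp only [ne_eq, map_eq_zero_iff φ hφ]
    exact X_ne_zero
  have hchar : ∀ M : Matrix (Fin n) (Fin n) ℝ,
      (charmatrix M).map φ = (φ X) • (1 : Matrix (Fin n) (Fin n) K)
        - M.map (φ.comp C) := by
    intro M
    ext i j
    by_cases h : i = j
    · subst h
      simp [charmatrix_apply_eq, Matrix.smul_apply]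
    · simp [charmatrix_apply_ne _ _ _ h, Matrix.one_apply_ne h, Matrix.smul_apply, h]
  set ψ := φ.comp C
  set a := A.map ψ
  set b := B.map ψ
  have hmapAB : (A * B).map ψ = a * b := by
    simp [a, b, Matrix.map_mul]
  have hmapBA : (B * A).map ψ = b * a := by
    simp [a, b, Matrix.map_mul]
  have key : ∀ c e : Matrix (Fin n) (Fin n) K,
      ((φ X) • (1 : Matrix (Fin n) (Fin n) K) - c * e).det
        = (φ X) ^ (Fintype.card (Fin n)) * (1 - (φ X)⁻¹ • (c * e)).det := by
    intro c e
    rw [← Matrix.det_smul, smul_sub, smul_smul, mul_inv_cancel₀ hx, one_smul]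
  rw [hdet, hdet, hchar, hchar, hmapAB, hmapBA, key, key]
  congr 1
  have h1 : (1 : Matrix (Fin n) (Fin n) K) - (φ X)⁻¹ • (a * b)
      = 1 - ((φ X)⁻¹ • a) * b := by rw [Matrix.smul_mul]
  have h2 : (1 : Matrix (Fin n) (Fin n) K) - (φ X)⁻¹ • (b * a)
      = 1 - b * ((φ X)⁻¹ • a) := by rw [Matrix.mul_smul]
  rw [h1, h2, Matrix.det_one_sub_mul_comm]

/-- Characteristic polynomial of a power of a real symmetric matrix. -/
lemma herm_pow_charpoly {n : ℕ} (A : Matrix (Fin n) (Fin n) ℝ) (hA : A.IsHermitian) (k : ℕ) :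
    (A ^ k).charpoly = ∏ i, (X - C (hA.eigenvalues i ^ k)) := by
  classical
  set U : Matrix (Fin n) (Fin n) ℝ := (hA.eigenvectorUnitary : Matrix (Fin n) (Fin n) ℝ)
  have hsU : star U * U = 1 := by
    simpa [U] using (Matrix.mem_unitaryGroup_iff').mp hA.eigenvectorUnitary.2
  have hUs : U * star U = 1 := by
    simpa [U] using (Matrix.mem_unitaryGroup_iff).mp hA.eigenvectorUnitary.2
  have hD : A = U * diagonal hA.eigenvalues * star U := by
    have := hA.spectral_theorem
    simpa [U] using this
  have hpow : ∀ (D : Matrix (Fin n) (Fin n) ℝ) (k : ℕ),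
      (U * D * star U) ^ k = U * D ^ k * star U := by
    intro D k
    induction k with
    | zero => simp [hUs]
    | succ k ih =>
        rw [pow_succ, ih, pow_succ]
        simp only [← Matrix.mul_assoc]
        rw [Matrix.mul_assoc (U * D ^ k) (star U) U, hsU, Matrix.mul_one]
  conv_lhs => rw [hD]
  rw [hpow]
  have := _root_.charpoly_mul_comm' (U * (diagonal hA.eigenvalues) ^ k) (star U)
  rw [this, ← Matrix.mul_assoc, hsU, Matrix.one_mul, Matrix.diagonal_pow]
  rw [Matrix.charpoly_of_upperTriangular _ (Matrix.blockTriangular_diagonal _)]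
  simp [Pi.pow_apply]

lemma roots_prod_eig {n : ℕ} (v : Fin n → ℝ) :
    (∏ i, (X - C (v i))).roots = Multiset.map v Finset.univ.val := by
  have h := Polynomial.roots_multiset_prod_X_sub_C (Multiset.map v Finset.univ.val)
  rw [Multiset.map_map] at h
  rw [← h, Finset.prod_eq_multiset_prod]
  rfl

/-- The multiset of roots of the characteristic polynomial of a real symmetric matrix
is the multiset of its eigenvalues. -/
lemma herm_roots {n : ℕ} (A : Matrix (Fin n) (Fin n) ℝ) (hA : A.IsHermitian) :
    A.charpoly.roots = Multiset.map hA.eigenvalues Finset.univ.val := by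
  have h := herm_pow_charpoly A hA 1
  rw [pow_one] at h
  rw [h]
  simp only [pow_one]
  exact roots_prod_eig _

lemma exists_equiv_of_multiset_map_eq {n : ℕ} (f g : Fin n → ℝ)
    (h : Multiset.map f Finset.univ.val = Multiset.map g Finset.univ.val) :
    ∃ e : Fin n ≃ Fin n, ∀ j, f j = g (e j) := by
  have hperm : List.Perm (List.ofFn f) (List.ofFn g) := by
    rw [← Multiset.coe_eq_coe, List.ofFn_eq_map, List.ofFn_eq_map,
      ← Multiset.map_coe, ← Multiset.map_coe]
    exact h
  have h1 : List.Perm (List.ofFn (f ∘ Tuple.sort f)) (List.ofFn (g ∘ Tuple.sort g)) :=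
    (((Tuple.sort f).ofFn_comp_perm f).trans hperm).trans
      ((Tuple.sort g).ofFn_comp_perm g).symm
  have heq : f ∘ Tuple.sort f = g ∘ Tuple.sort g :=
    List.ofFn_injective (List.Perm.eq_of_sortedLE
      (Tuple.monotone_sort f).sortedLE_ofFn (Tuple.monotone_sort g).sortedLE_ofFn h1)
  refine ⟨(Tuple.sort f).symm.trans (Tuple.sort g), fun j => ?_⟩
  have := congrFun heq ((Tuple.sort f).symm j)
  simpa using this

lemma mul_pow_mul' {M : Type*} [Monoid M] (a b : M) (k : ℕ) :
    a * (b * a) ^ k * b = (a * b) ^ (k + 1) := by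
  induction k with
  | zero => simp
  | succ k ih =>
      rw [pow_succ', ← mul_assoc a (b * a), ← mul_assoc a b a, mul_assoc (a * b) a,
        mul_assoc (a * b), ih, ← pow_succ']

/-- Balanced factorizations: if `W_m ⋯ W_1 = T` and `W_i W_iᵀ = W_{i+1}ᵀ W_{i+1}`
for all `i`, then all `W_i` have the same singular values (with multiplicity),
namely the `m`-th roots of the singular values of `T` (expressed via the
eigenvalues of `WᴴW` and `TᴴT`). -/
theorem stmt15 (d m : ℕ) (hm : 1 ≤ m) (T : Matrix (Fin d) (Fin d) ℝ)
    (W : ℕ → Matrix (Fin d) (Fin d) ℝ)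
    (hprod : ((List.ofFn (fun i : Fin m => W i)).reverse).prod = T)
    (hbal : ∀ i, i + 1 < m → W i * (W i)ᵀ = (W (i + 1))ᵀ * W (i + 1)) :
    ∀ i < m, ∃ e : Fin d ≃ Fin d, ∀ j,
      (Matrix.isHermitian_conjTranspose_mul_self (W i)).eigenvalues j =
        ((Matrix.isHermitian_conjTranspose_mul_self T).eigenvalues (e j)) ^ ((1 : ℝ) / m) := by
  classical
  have hct : ∀ (M : Matrix (Fin d) (Fin d) ℝ), Mᴴ = Mᵀ :=
    fun M => Matrix.conjTranspose_eq_transpose_of_trivial M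
  -- all the Gram matrices have the same characteristic polynomial
  have chain : ∀ j, j < m → ((W j)ᵀ * W j).charpoly = ((W 0)ᵀ * W 0).charpoly := by
    intro j
    induction j with
    | zero => intro _; rfl
    | succ k ih =>
        intro h
        rw [← hbal k h, _root_.charpoly_mul_comm' (W k) (W k)ᵀ]
        exact ih (Nat.lt_of_succ_lt h)
  -- product identity
  have prodlem : ∀ k, k < m →
      (((List.ofFn fun i : Fin (k + 1) => W i).reverse).prod) *
        (((List.ofFn fun i : Fin (k + 1) => W i).reverse).prod)ᵀ
          = (W k * (W k)ᵀ) ^ (k + 1) := by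
    intro k
    induction k with
    | zero => intro _; simp [List.ofFn_succ]
    | succ k ih =>
        intro h
        have hP : (List.ofFn fun i : Fin (k + 2) => W i).reverse.prod
            = W (k + 1) * (List.ofFn fun i : Fin (k + 1) => W i).reverse.prod := by
          rw [List.ofFn_succ']
          simp [List.concat_eq_append]
        rw [hP, Matrix.transpose_mul]
        have hPP := ih (Nat.lt_of_succ_lt h)
        calc (W (k + 1) * (List.ofFn fun i : Fin (k + 1) => W i).reverse.prod) *
              (((List.ofFn fun i : Fin (k + 1) => W i).reverse.prod)ᵀ * (W (k + 1))ᵀ)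
            = W (k + 1) * ((List.ofFn fun i : Fin (k + 1) => W i).reverse.prod *
                ((List.ofFn fun i : Fin (k + 1) => W i).reverse.prod)ᵀ) * (W (k + 1))ᵀ := by
              noncomm_ring
          _ = W (k + 1) * ((W (k + 1))ᵀ * W (k + 1)) ^ (k + 1) * (W (k + 1))ᵀ := by
              rw [hPP, hbal k h]
          _ = (W (k + 1) * (W (k + 1))ᵀ) ^ (k + 2) := mul_pow_mul' _ _ _
  intro i hi
  obtain ⟨n, rfl⟩ : ∃ n, m = n + 1 := ⟨m - 1, (Nat.succ_pred_eq_of_pos hm).symm⟩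
  set hGi := Matrix.isHermitian_conjTranspose_mul_self (W i) with hGidef
  set hT := Matrix.isHermitian_conjTranspose_mul_self T with hTdef
  have hTT : T * Tᵀ = (W n * (W n)ᵀ) ^ (n + 1) := by
    rw [← hprod]; exact prodlem n (Nat.lt_succ_self n)
  set H := W n * (W n)ᵀ with hHdef
  have hH : H.IsHermitian := by
    rw [hHdef, ← hct]
    exact Matrix.isHermitian_mul_conjTranspose_self (W n)
  -- charpoly of TᴴT equals charpoly of H^(n+1)
  have e1 : (Tᴴ * T).charpoly = (H ^ (n + 1)).charpoly := by
    rw [hct, _root_.charpoly_mul_comm' Tᵀ T, hTT]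
  -- eigenvalue multiset of TᴴT
  have e2 : Multiset.map hT.eigenvalues Finset.univ.val
      = Multiset.map (fun j => hH.eigenvalues j ^ (n + 1)) Finset.univ.val := by
    rw [← herm_roots _ hT, e1, herm_pow_charpoly H hH (n + 1), roots_prod_eig]
  -- eigenvalues of H agree with those of Gᵢ
  have e3 : Multiset.map hH.eigenvalues Finset.univ.val
      = Multiset.map hGi.eigenvalues Finset.univ.val := by
    rw [← herm_roots _ hH, ← herm_roots _ hGi]
    have : H.charpoly = ((W i)ᴴ * W i).charpoly := by
      rw [hHdef, _root_.charpoly_mul_comm' (W n) (W n)ᵀ, chain n (Nat.lt_succ_self n),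
        ← chain i hi, hct]
    rw [this]
  have e4 : Multiset.map (fun j => hGi.eigenvalues j ^ (n + 1)) Finset.univ.val
      = Multiset.map hT.eigenvalues Finset.univ.val := by
    rw [e2]
    have := congrArg (Multiset.map (fun x : ℝ => x ^ (n + 1))) e3
    rw [Multiset.map_map, Multiset.map_map] at this
    exact this.symm
  obtain ⟨e, he⟩ := exists_equiv_of_multiset_map_eq _ _ e4
  refine ⟨e, fun j => ?_⟩
  have h0 : 0 ≤ hGi.eigenvalues j := by
    rw [hGidef]
    exact Matrix.eigenvalues_conjTranspose_mul_self_nonneg (W i) j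
  rw [← he j, one_div]
  exact (Real.pow_rpow_inv_natCast h0 (Nat.succ_ne_zero n)).symm
end
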